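/- arXiv:1810.04460 — 3 statements merged into one kernel-verified Lean document; each statement's English description precedes it below -/
import Mathlib

section
/- Every entry of P^{⊗t} equals either 2^{−t} or −2^{−t}, and in each row of P^{⊗t} exactly (4^t + 2^t)/2 entries are positive and exactly (4^t − 2^t)/2 entries are negative. -/
open Matrix Finset

noncomputable def P : Matrix (Fin 4) (Fin 4) ℝ :=
  (1/2 : ℝ) • !![1, 1, -1, 1; 1, 1, 1, -1; -1, 1, 1, 1; 1, -1, 1, 1]

/-- The t-fold Kronecker power of `P`. -/
noncomputable def Pt (t : ℕ) : Matrix (Fin t → Fin 4) (Fin t → Fin 4) ℝ :=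
  fun i j => ∏ s, P (i s) (j s)

lemma P_entry (a b : Fin 4) : P a b = (2:ℝ)⁻¹ ∨ P a b = -(2:ℝ)⁻¹ := by
  fin_cases a <;> fin_cases b <;> norm_num [P]

lemma P_row_sum (a : Fin 4) : ∑ b, P a b = 1 := by
  fin_cases a <;> norm_num [P, Fin.sum_univ_four, Matrix.cons_val_two, Matrix.cons_val_three]

lemma Pt_entry (t : ℕ) (i j : Fin t → Fin 4) :
    Pt t i j = (2:ℝ)⁻¹ ^ t ∨ Pt t i j = -(2:ℝ)⁻¹ ^ t := by
  unfold Pt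
  rw [← Fin.prod_const t ((2:ℝ)⁻¹)]
  induction (univ : Finset (Fin t)) using Finset.induction with
  | empty => simp
  | @insert a s ha ih =>
    rw [Finset.prod_insert ha, Finset.prod_insert ha]
    rcases P_entry (i a) (j a) with h | h <;> rcases ih with h' | h' <;>
      rw [h, h'] <;> ring_nf <;> simp

lemma Pt_row_sum (t : ℕ) (i : Fin t → Fin 4) : ∑ j, Pt t i j = 1 := by
  unfold Pt
  rw [← Fintype.prod_sum (fun s (b : Fin 4) => P (i s) b)]
  simp [P_row_sum]

/-- Every entry of `P^{⊗t}` is `±2^{-t}`, and each row has exactly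
`(4^t + 2^t)/2` positive entries and `(4^t − 2^t)/2` negative entries. -/
theorem Pt_entries_and_row_sign_count (t : ℕ) :
    (∀ i j, Pt t i j = (2:ℝ)⁻¹ ^ t ∨ Pt t i j = -(2:ℝ)⁻¹ ^ t) ∧
    (∀ i, (univ.filter (fun j => 0 < Pt t i j)).card = (4 ^ t + 2 ^ t) / 2) ∧
    (∀ i, (univ.filter (fun j => Pt t i j < 0)).card = (4 ^ t - 2 ^ t) / 2) := by
  classical
  have hpow : (0:ℝ) < (2:ℝ)⁻¹ ^ t := by positivity
  have key : ∀ i : Fin t → Fin 4,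
      (univ.filter (fun j => 0 < Pt t i j)).card = (4 ^ t + 2 ^ t) / 2 ∧
      (univ.filter (fun j => Pt t i j < 0)).card = (4 ^ t - 2 ^ t) / 2 := by
    intro i
    set Sp := univ.filter (fun j => 0 < Pt t i j) with hSp
    set Sn := univ.filter (fun j => Pt t i j < 0) with hSn
    have hval_p : ∀ j ∈ Sp, Pt t i j = (2:ℝ)⁻¹ ^ t := by
      intro j hj
      rcases Pt_entry t i j with h | h
      · exact h
      · exfalso
        have := (mem_filter.mp hj).2
        rw [h] at this; linarith
    have hval_n : ∀ j ∈ Sn, Pt t i j = -(2:ℝ)⁻¹ ^ t := by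
      intro j hj
      rcases Pt_entry t i j with h | h
      · exfalso
        have := (mem_filter.mp hj).2
        rw [h] at this; linarith
      · exact h
    have hcompl : Sn = Spᶜ := by
      ext j
      simp only [hSp, hSn, Finset.mem_compl, mem_filter, mem_univ, true_and, not_lt]
      constructor
      · intro h; linarith
      · intro h
        rcases Pt_entry t i j with h' | h'
        · exfalso; rw [h'] at h; linarith
        · rw [h']; linarith
    have hsplit : ∑ j ∈ Sp, Pt t i j + ∑ j ∈ Sn, Pt t i j = 1 := by
      rw [hcompl, Finset.sum_add_sum_compl]
      exact Pt_row_sum t i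
    rw [Finset.sum_congr rfl hval_p, Finset.sum_congr rfl hval_n] at hsplit
    simp only [Finset.sum_const, nsmul_eq_mul] at hsplit
    have hcardsum : Sp.card + Sn.card = 4 ^ t := by
      rw [hcompl, Finset.card_add_card_compl]
      simp [Fintype.card_fun]
    -- derive 2 * Sp.card = 4^t + 2^t over ℝ
    have h2 : ((2:ℝ)⁻¹)^t * (2:ℝ)^t = 1 := by
      rw [← mul_pow]; norm_num
    have hdiff : (Sp.card : ℝ) - (Sn.card : ℝ) = 2 ^ t := by
      have h3 : ((Sp.card : ℝ) - Sn.card) * (2:ℝ)⁻¹ ^ t = 1 := by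
        ring_nf; ring_nf at hsplit; linarith
      have h4 : (2:ℝ) ^ t * (2:ℝ)⁻¹ ^ t = 1 := by rw [mul_comm]; exact h2
      exact mul_right_cancel₀ (ne_of_gt hpow) (h3.trans h4.symm)
    have hsum : (Sp.card : ℝ) + (Sn.card : ℝ) = 4 ^ t := by
      exact_mod_cast congrArg (Nat.cast : ℕ → ℝ) hcardsum
    have hSpR : (Sp.card : ℝ) * 2 = 4 ^ t + 2 ^ t := by linarith
    have hSnR : (Sn.card : ℝ) * 2 = 4 ^ t - 2 ^ t := by linarith
    have hple : 2 ^ t ≤ 4 ^ t := Nat.pow_le_pow_left (by norm_num) t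
    have hSpN : Sp.card * 2 = 4 ^ t + 2 ^ t := by exact_mod_cast hSpR
    have hSnN : Sn.card * 2 = 4 ^ t - 2 ^ t := by
      have : (Sn.card : ℝ) * 2 = ((4 ^ t - 2 ^ t : ℕ) : ℝ) := by
        rw [Nat.cast_sub hple]; push_cast; linarith
      exact_mod_cast this
    constructor
    · omega
    · omega
  exact ⟨fun i j => Pt_entry t i j, fun i => (key i).1, fun i => (key i).2⟩
end

section
/- For any two distinct rows of P^{⊗2}, exactly 6 columns have positive entries in both rows, exactly 4 columns have a positive entry in the first row and a negative entry in the second, exactly 4 columns have a negative entry in the first row and a positive entry in the second, and exactly 2 columns have negative entries in both rows. -/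
open Matrix Finset

/-- The Kronecker square `P^{⊗2}`, indexed by pairs in `{0,1,2,3}²`. -/
noncomputable def P2 : Matrix (Fin 4 × Fin 4) (Fin 4 × Fin 4) ℝ :=
  fun i j => P i.1 j.1 * P i.2 j.2

def sgn : Fin 4 → Fin 4 → ℤ :=
  ![![1, 1, -1, 1], ![1, 1, 1, -1], ![-1, 1, 1, 1], ![1, -1, 1, 1]]

lemma P_eq (a b : Fin 4) : P a b = (sgn a b : ℝ) / 2 := by
  fin_cases a <;> fin_cases b <;> norm_num [P, sgn]

lemma P2_pos_iff (i j : Fin 4 × Fin 4) :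
    0 < P2 i j ↔ 0 < sgn i.1 j.1 * sgn i.2 j.2 := by
  rw [P2, P_eq, P_eq, div_mul_div_comm]
  rw [div_pos_iff]
  constructor
  · rintro (⟨h1, _⟩ | ⟨_, h2⟩)
    · exact_mod_cast (by exact_mod_cast h1 : (0:ℝ) < (sgn i.1 j.1 * sgn i.2 j.2 : ℤ))
    · norm_num at h2
  · intro h
    left
    exact ⟨by exact_mod_cast h, by norm_num⟩

lemma P2_neg_iff (i j : Fin 4 × Fin 4) :
    P2 i j < 0 ↔ sgn i.1 j.1 * sgn i.2 j.2 < 0 := by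
  rw [P2, P_eq, P_eq, div_mul_div_comm]
  rw [div_neg_iff]
  constructor
  · rintro (⟨_, h2⟩ | ⟨h1, _⟩)
    · norm_num at h2
    · exact_mod_cast (by exact_mod_cast h1 : ((sgn i.1 j.1 * sgn i.2 j.2 : ℤ) : ℝ) < 0)
  · intro h
    right
    exact ⟨by exact_mod_cast h, by norm_num⟩

/-- For any two distinct rows of `P^{⊗2}`: 6 columns are `(+,+)`, 4 are
`(+,−)`, 4 are `(−,+)`, and 2 are `(−,−)`. -/
theorem P2_two_rows_sign_pattern (i i' : Fin 4 × Fin 4) (h : i ≠ i') :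
    (univ.filter (fun j => 0 < P2 i j ∧ 0 < P2 i' j)).card = 6 ∧
    (univ.filter (fun j => 0 < P2 i j ∧ P2 i' j < 0)).card = 4 ∧
    (univ.filter (fun j => P2 i j < 0 ∧ 0 < P2 i' j)).card = 4 ∧
    (univ.filter (fun j => P2 i j < 0 ∧ P2 i' j < 0)).card = 2 := by
  simp only [P2_pos_iff, P2_neg_iff]
  revert h
  revert i i'
  decide
end

section
/- Each row of P^{⊗3} contains exactly 36 positive entries (equal to 1/8) and exactly 28 negative entries (equal to −1/8), and for any two distinct rows of P^{⊗3} the joint sign pattern over the 64 columns is: 20 columns (+,+), 16 columns (+,−), 16 columns (−,+), and 12 columns (−,−). -/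
open Matrix Finset

/-- The threefold Kronecker power `P^{⊗3}`, indexed by `{0,1,2,3}³`. -/
noncomputable def P3 : Matrix (Fin 4 × Fin 4 × Fin 4) (Fin 4 × Fin 4 × Fin 4) ℝ :=
  fun i j => P i.1 j.1 * (P i.2.1 j.2.1 * P i.2.2 j.2.2)

/-- Sign matrix of `P` : `true` means the entry is negative. -/
def B (i j : Fin 4) : Bool := j.val == (i.val + 2) % 4

/-- Sign of `P3` : `true` means negative. -/
def S (i j : Fin 4 × Fin 4 × Fin 4) : Bool :=
  xor (B i.1 j.1) (xor (B i.2.1 j.2.1) (B i.2.2 j.2.2))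

lemma Pval (a b : Fin 4) : P a b = if B a b then -(1/2 : ℝ) else (1/2 : ℝ) := by
  fin_cases a <;> fin_cases b <;>
    simp [P, B, Matrix.vecHead, Matrix.vecTail] <;> norm_num

lemma P3val (i j : Fin 4 × Fin 4 × Fin 4) :
    P3 i j = if S i j then -(1/8 : ℝ) else (1/8 : ℝ) := by
  simp only [P3, S, Pval]
  rcases Bool.eq_false_or_eq_true (B i.1 j.1) with h1 | h1 <;>
    rcases Bool.eq_false_or_eq_true (B i.2.1 j.2.1) with h2 | h2 <;>
    rcases Bool.eq_false_or_eq_true (B i.2.2 j.2.2) with h3 | h3 <;>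
    simp only [h1, h2, h3, Bool.xor_false, Bool.xor_true, Bool.false_xor, Bool.true_xor,
      Bool.not_false, Bool.not_true, if_true, if_false] <;> norm_num

lemma pos_iff (i j : Fin 4 × Fin 4 × Fin 4) : 0 < P3 i j ↔ S i j = false := by
  rw [P3val]
  rcases Bool.eq_false_or_eq_true (S i j) with h | h <;> simp [h] <;> norm_num

lemma neg_iff (i j : Fin 4 × Fin 4 × Fin 4) : P3 i j < 0 ↔ S i j = true := by
  rw [P3val]
  rcases Bool.eq_false_or_eq_true (S i j) with h | h <;> simp [h] <;> norm_num

set_option maxHeartbeats 2000000 in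
lemma row_pos : ∀ i : Fin 4 × Fin 4 × Fin 4,
    (univ.filter fun j => S i j = false).card = 36 := by decide

set_option maxHeartbeats 2000000 in
lemma row_neg : ∀ i : Fin 4 × Fin 4 × Fin 4,
    (univ.filter fun j => S i j = true).card = 28 := by decide

/-- xor of corresponding rows of the sign matrix. -/
def D (a b x : Fin 4) : Bool := xor (B a x) (B b x)

lemma innerSumD : ∀ a b : Fin 4, a ≠ b → ∀ c : Bool,
    (∑ x : Fin 4, if xor (D a b x) c = false then 1 else 0) = 2 := by decide

lemma xor_swap12 (a b c : Bool) : xor a (xor b c) = xor b (xor a c) := by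
  cases a <;> cases b <;> cases c <;> rfl

lemma xor_swap13 (a b c : Bool) : xor a (xor b c) = xor c (xor a b) := by
  cases a <;> cases b <;> cases c <;> rfl

lemma S_eq_iff (i i' j : Fin 4 × Fin 4 × Fin 4) :
    (S i j = S i' j) ↔
      xor (D i.1 i'.1 j.1) (xor (D i.2.1 i'.2.1 j.2.1) (D i.2.2 i'.2.2 j.2.2)) = false := by
  simp only [S, D]
  rcases Bool.eq_false_or_eq_true (B i.1 j.1) with h1 | h1 <;>
    rcases Bool.eq_false_or_eq_true (B i.2.1 j.2.1) with h2 | h2 <;>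
    rcases Bool.eq_false_or_eq_true (B i.2.2 j.2.2) with h3 | h3 <;>
    rcases Bool.eq_false_or_eq_true (B i'.1 j.1) with h4 | h4 <;>
    rcases Bool.eq_false_or_eq_true (B i'.2.1 j.2.1) with h5 | h5 <;>
    rcases Bool.eq_false_or_eq_true (B i'.2.2 j.2.2) with h6 | h6 <;>
    simp [h1, h2, h3, h4, h5, h6]

lemma sum3_first (f g h : Fin 4 → Bool)
    (hf : ∀ c : Bool, (∑ x : Fin 4, if xor (f x) c = false then 1 else 0) = 2) :
    (∑ x : Fin 4, ∑ y : Fin 4, ∑ z : Fin 4,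
        if xor (f x) (xor (g y) (h z)) = false then 1 else 0) = 32 := by
  rw [Finset.sum_comm]
  have key : ∀ y : Fin 4,
      (∑ x : Fin 4, ∑ z : Fin 4,
        if xor (f x) (xor (g y) (h z)) = false then 1 else 0) = 8 := by
    intro y
    rw [Finset.sum_comm]
    rw [show (∑ z : Fin 4, ∑ x : Fin 4,
        if xor (f x) (xor (g y) (h z)) = false then 1 else 0) = ∑ _z : Fin 4, 2 from
      Finset.sum_congr rfl fun z _ => hf _]
    simp
  rw [show (∑ y : Fin 4, ∑ x : Fin 4, ∑ z : Fin 4,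
      if xor (f x) (xor (g y) (h z)) = false then 1 else 0) = ∑ _y : Fin 4, 8 from
    Finset.sum_congr rfl fun y _ => key y]
  simp

lemma agree_card (i i' : Fin 4 × Fin 4 × Fin 4) (hne : i ≠ i') :
    (univ.filter fun j => S i j = S i' j).card = 32 := by
  rw [Finset.filter_congr (fun j _ => S_eq_iff i i' j), Finset.card_filter]
  simp only [Fintype.sum_prod_type]
  have hcases : i.1 ≠ i'.1 ∨ i.2.1 ≠ i'.2.1 ∨ i.2.2 ≠ i'.2.2 := by
    by_contra h
    push_neg at h
    exact hne (Prod.ext h.1 (Prod.ext h.2.1 h.2.2))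
  rcases hcases with h | h | h
  · exact sum3_first _ _ _ (fun c => innerSumD _ _ h c)
  · calc (∑ x : Fin 4, ∑ y : Fin 4, ∑ z : Fin 4,
        if xor (D i.1 i'.1 x) (xor (D i.2.1 i'.2.1 y) (D i.2.2 i'.2.2 z)) = false
          then 1 else 0)
        = ∑ y : Fin 4, ∑ x : Fin 4, ∑ z : Fin 4,
            if xor (D i.1 i'.1 x) (xor (D i.2.1 i'.2.1 y) (D i.2.2 i'.2.2 z)) = false
              then 1 else 0 := Finset.sum_comm
      _ = ∑ y : Fin 4, ∑ x : Fin 4, ∑ z : Fin 4,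
            if xor (D i.2.1 i'.2.1 y) (xor (D i.1 i'.1 x) (D i.2.2 i'.2.2 z)) = false
              then 1 else 0 := by
          refine Finset.sum_congr rfl fun y _ => Finset.sum_congr rfl fun x _ =>
            Finset.sum_congr rfl fun z _ => ?_
          rw [xor_swap12]
      _ = 32 := sum3_first _ _ _ (fun c => innerSumD _ _ h c)
  · calc (∑ x : Fin 4, ∑ y : Fin 4, ∑ z : Fin 4,
        if xor (D i.1 i'.1 x) (xor (D i.2.1 i'.2.1 y) (D i.2.2 i'.2.2 z)) = false
          then 1 else 0)
        = ∑ x : Fin 4, ∑ z : Fin 4, ∑ y : Fin 4,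
            if xor (D i.1 i'.1 x) (xor (D i.2.1 i'.2.1 y) (D i.2.2 i'.2.2 z)) = false
              then 1 else 0 := Finset.sum_congr rfl fun x _ => Finset.sum_comm
      _ = ∑ z : Fin 4, ∑ x : Fin 4, ∑ y : Fin 4,
            if xor (D i.1 i'.1 x) (xor (D i.2.1 i'.2.1 y) (D i.2.2 i'.2.2 z)) = false
              then 1 else 0 := Finset.sum_comm
      _ = ∑ z : Fin 4, ∑ x : Fin 4, ∑ y : Fin 4,
            if xor (D i.2.2 i'.2.2 z) (xor (D i.1 i'.1 x) (D i.2.1 i'.2.1 y)) = false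
              then 1 else 0 := by
          refine Finset.sum_congr rfl fun z _ => Finset.sum_congr rfl fun x _ =>
            Finset.sum_congr rfl fun y _ => ?_
          rw [xor_swap13]
      _ = 32 := sum3_first _ _ _ (fun c => innerSumD _ _ h c)

lemma split_count {α : Type*} [Fintype α] [DecidableEq α] (u v : α → Bool) (c : Bool) :
    (univ.filter fun j => u j = c ∧ v j = false).card
      + (univ.filter fun j => u j = c ∧ v j = true).card
      = (univ.filter fun j => u j = c).card := by
  have h := Finset.card_filter_add_card_filter_not
    (s := univ.filter fun j => u j = c) (p := fun j => v j = false)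
  rw [Finset.filter_filter, Finset.filter_filter] at h
  rw [show (univ.filter fun a => u a = c ∧ ¬ v a = false)
      = (univ.filter fun j => u j = c ∧ v j = true) from
    Finset.filter_congr (fun j _ => by
      rcases Bool.eq_false_or_eq_true (v j) with hv | hv <;> simp [hv])] at h
  exact h

lemma pair_counts (i i' : Fin 4 × Fin 4 × Fin 4) (hne : i ≠ i') :
    (univ.filter fun j => S i j = false ∧ S i' j = false).card = 20 ∧
    (univ.filter fun j => S i j = false ∧ S i' j = true).card = 16 ∧
    (univ.filter fun j => S i j = true ∧ S i' j = false).card = 16 ∧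
    (univ.filter fun j => S i j = true ∧ S i' j = true).card = 12 := by
  have h1 := split_count (S i) (S i') false
  rw [row_pos i] at h1
  have h2 := split_count (S i) (S i') true
  rw [row_neg i] at h2
  have h3 := split_count (S i') (S i) false
  rw [row_pos i'] at h3
  rw [show (univ.filter fun j => S i' j = false ∧ S i j = false)
      = (univ.filter fun j => S i j = false ∧ S i' j = false) from
    Finset.filter_congr (fun j _ => and_comm),
    show (univ.filter fun j => S i' j = false ∧ S i j = true)
      = (univ.filter fun j => S i j = true ∧ S i' j = false) from
    Finset.filter_congr (fun j _ => and_comm)] at h3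
  -- agreement split
  have h4 := Finset.card_filter_add_card_filter_not
    (s := univ.filter fun j => S i j = S i' j) (p := fun j => S i j = false)
  rw [agree_card i i' hne, Finset.filter_filter, Finset.filter_filter] at h4
  rw [show (univ.filter fun j => (S i j = S i' j) ∧ S i j = false)
      = (univ.filter fun j => S i j = false ∧ S i' j = false) from
    Finset.filter_congr (fun j _ => by
      rcases Bool.eq_false_or_eq_true (S i j) with hu | hu <;>
        rcases Bool.eq_false_or_eq_true (S i' j) with hv | hv <;> simp [hu, hv]),
    show (univ.filter fun j => (S i j = S i' j) ∧ ¬ S i j = false)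
      = (univ.filter fun j => S i j = true ∧ S i' j = true) from
    Finset.filter_congr (fun j _ => by
      rcases Bool.eq_false_or_eq_true (S i j) with hu | hu <;>
        rcases Bool.eq_false_or_eq_true (S i' j) with hv | hv <;> simp [hu, hv])] at h4
  omega

/-- Each row of `P^{⊗3}` has 36 positive entries (= 1/8) and 28 negative
entries (= −1/8); any two distinct rows have joint sign pattern
20 `(+,+)`, 16 `(+,−)`, 16 `(−,+)`, 12 `(−,−)`. -/
theorem P3_sign_patterns :
    (∀ i : Fin 4 × Fin 4 × Fin 4,
      (univ.filter (fun j => 0 < P3 i j)).card = 36 ∧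
      (univ.filter (fun j => P3 i j < 0)).card = 28 ∧
      (∀ j, 0 < P3 i j → P3 i j = 1/8) ∧
      (∀ j, P3 i j < 0 → P3 i j = -(1/8))) ∧
    (∀ i i' : Fin 4 × Fin 4 × Fin 4, i ≠ i' →
      (univ.filter (fun j => 0 < P3 i j ∧ 0 < P3 i' j)).card = 20 ∧
      (univ.filter (fun j => 0 < P3 i j ∧ P3 i' j < 0)).card = 16 ∧
      (univ.filter (fun j => P3 i j < 0 ∧ 0 < P3 i' j)).card = 16 ∧
      (univ.filter (fun j => P3 i j < 0 ∧ P3 i' j < 0)).card = 12) := by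
  constructor
  · intro i
    refine ⟨?_, ?_, ?_, ?_⟩
    · rw [Finset.filter_congr (fun j _ => pos_iff i j)]
      exact row_pos i
    · rw [Finset.filter_congr (fun j _ => neg_iff i j)]
      exact row_neg i
    · intro j hj
      rw [P3val] at hj ⊢
      rcases Bool.eq_false_or_eq_true (S i j) with h | h <;> simp [h] at hj ⊢ <;>
        norm_num at hj
    · intro j hj
      rw [P3val] at hj ⊢
      rcases Bool.eq_false_or_eq_true (S i j) with h | h <;> simp [h] at hj ⊢ <;>
        norm_num at hj
  · intro i i' hne
    obtain ⟨h1, h2, h3, h4⟩ := pair_counts i i' hne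
    refine ⟨?_, ?_, ?_, ?_⟩
    · rw [Finset.filter_congr (fun j _ => and_congr (pos_iff i j) (pos_iff i' j))]
      exact h1
    · rw [Finset.filter_congr (fun j _ => and_congr (pos_iff i j) (neg_iff i' j))]
      exact h2
    · rw [Finset.filter_congr (fun j _ => and_congr (neg_iff i j) (pos_iff i' j))]
      exact h3
    · rw [Finset.filter_congr (fun j _ => and_congr (neg_iff i j) (neg_iff i' j))]
      exact h4
end
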